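/- arXiv:1509.07828 — 2 statements merged into one kernel-verified Lean document; each statement's English description precedes it below -/
import Mathlib

section
/- Let A be a ring, M an A-module with projective resolution F, and p: Σ^{-d}F → F a chain map representing a class in Ext^d_A(M,M) for some d ≥ 1. Then the mapping-cone construction yields a short exact sequence of A-modules 0 → M → K_p → Ω^{d−1}_A(M) → 0, where K_p is the cokernel of the map F_d ⊕ F_1 → F_{d−1} ⊕ F_0 given by the matrix ((−∂_d, 0), (p, ∂_1)). -/
set_option linter.unnecessarySimpa false
set_option maxHeartbeats 1000000

open CategoryTheory IsLocalRing

/-- The `i`-th Ext module of `M` and `N` over `S`. -/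
noncomputable def ExtType (S : Type) [CommRing S] (M N : Type) [AddCommGroup M] [Module S M]
    [AddCommGroup N] [Module S N] (i : ℕ) : Type _ :=
  ((Ext S (ModuleCat.{0} S) i).obj (Opposite.op (ModuleCat.of S M))).obj (ModuleCat.of S N)

noncomputable instance (S : Type) [CommRing S] (M N : Type) [AddCommGroup M] [Module S M]
    [AddCommGroup N] [Module S N] (i : ℕ) : AddCommGroup (ExtType S M N i) := by
  unfold ExtType; infer_instance

noncomputable instance (S : Type) [CommRing S] (M N : Type) [AddCommGroup M] [Module S M]
    [AddCommGroup N] [Module S N] (i : ℕ) : Module S (ExtType S M N i) := by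
  unfold ExtType; infer_instance

/-- `M` has projective dimension at most `p` over `S`, expressed via vanishing of `Ext`. -/
def ProjDimLE (S : Type) [CommRing S] (M : Type) [AddCommGroup M] [Module S M] (p : ℕ) : Prop :=
  ∀ (N : Type) [AddCommGroup N] [Module S N], ∀ i : ℕ, p < i → Subsingleton (ExtType S M N i)

/-- The `Q ⧸ J`-module structure on a `Q`-module annihilated by `J`. -/
noncomputable def modOver (Q : Type) [CommRing Q] (J : Ideal Q) (M : Type) [AddCommGroup M]
    [Module Q M] (h : ∀ x ∈ J, ∀ m : M, x • m = 0) : Module (Q ⧸ J) M :=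
  Module.IsTorsionBySet.module (fun m a => h a.1 a.2 m)

theorem annOfSpan {Q : Type} [CommRing Q] {f : Q} {M : Type} [AddCommGroup M] [Module Q M]
    (h : ∀ m : M, f • m = 0) : ∀ x ∈ Ideal.span {f}, ∀ m : M, x • m = 0 := by
  intro x hx m
  obtain ⟨c, rfl⟩ := Ideal.mem_span_singleton'.mp hx
  rw [mul_smul, h m, smul_zero]

/-- The support variety of the pair `(M, N)` of modules over `R = Q ⧸ I`, realized as the
subset of `V = I/𝔫I` consisting of `0` together with the classes `f̄` of elements `f ∈ I` such
that `Ext^i_{Q/(f)}(M, N) ≠ 0` for infinitely many `i`. -/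
noncomputable def SuppVar (Q : Type) [CommRing Q] [IsLocalRing Q] (I : Ideal Q)
    (M N : Type) [AddCommGroup M] [Module Q M] [AddCommGroup N] [Module Q N]
    (hM : ∀ x ∈ I, ∀ m : M, x • m = 0) (hN : ∀ x ∈ I, ∀ n : N, x • n = 0) :
    Set (I ⧸ (maximalIdeal Q • ⊤ : Submodule Q I)) :=
  {0} ∪ {v | ∃ f : I, Submodule.Quotient.mk f = v ∧
    letI := modOver Q (Ideal.span {(f : Q)}) M
      (fun x hx m => hM x (Ideal.span_le.mpr (by simpa using f.2) hx) m)
    letI := modOver Q (Ideal.span {(f : Q)}) N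
      (fun x hx n => hN x (Ideal.span_le.mpr (by simpa using f.2) hx) n)
    {i : ℕ | Nontrivial (ExtType (Q ⧸ Ideal.span {(f : Q)}) M N i)}.Infinite}

/-- `K` is a (first) syzygy of `M` over `S`. -/
def IsSyzygy (S : Type) [CommRing S] (M K : ModuleCat.{0} S) : Prop :=
  ∃ (F : ModuleCat.{0} S) (f : F ⟶ M), Module.Free S F ∧ Function.Surjective f ∧
    Nonempty (K ≃ₗ[S] LinearMap.ker f.hom)

/-- `K` is an `n`-th syzygy of `M` over `S`. -/
def IsNthSyzygy (S : Type) [CommRing S] : ℕ → ModuleCat.{0} S → ModuleCat.{0} S → Prop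
  | 0, M, K => Nonempty (K ≃ₗ[S] M)
  | n + 1, M, K => ∃ X : ModuleCat.{0} S, IsSyzygy S M X ∧ IsNthSyzygy S n X K

/-- `K` is a minimal (first) syzygy of `M` over the local ring `S`. -/
def IsMinSyzygy (S : Type) [CommRing S] [IsLocalRing S] (M K : ModuleCat.{0} S) : Prop :=
  ∃ (F : ModuleCat.{0} S) (f : F ⟶ M), Module.Free S F ∧ Module.Finite S F ∧
    Function.Surjective f ∧ (LinearMap.ker f.hom : Submodule S F) ≤ maximalIdeal S • ⊤ ∧
    Nonempty (K ≃ₗ[S] LinearMap.ker f.hom)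

/-- `K` is an `n`-th minimal syzygy of `M` over the local ring `S`. -/
def IsNthMinSyzygy (S : Type) [CommRing S] [IsLocalRing S] :
    ℕ → ModuleCat.{0} S → ModuleCat.{0} S → Prop
  | 0, M, K => Nonempty (K ≃ₗ[S] M)
  | n + 1, M, K => ∃ X : ModuleCat.{0} S, IsMinSyzygy S M X ∧ IsNthMinSyzygy S n X K

/-- A local ring is regular iff it is Noetherian and its maximal ideal is generated by a
regular sequence. -/
def IsRegularLocal (Q : Type) [CommRing Q] [IsLocalRing Q] : Prop :=
  IsNoetherianRing Q ∧ ∃ rs : List Q, RingTheory.Sequence.IsRegular Q rs ∧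
    Ideal.span {x | x ∈ rs} = maximalIdeal Q

/-- A local ring is Cohen–Macaulay iff it is Noetherian and there is a regular sequence in the
maximal ideal whose length is the Krull dimension. -/
def IsCohenMacaulayLocal (A : Type) [CommRing A] [IsLocalRing A] : Prop :=
  IsNoetherianRing A ∧ ∃ rs : List A, (∀ x ∈ rs, x ∈ maximalIdeal A) ∧
    RingTheory.Sequence.IsRegular A rs ∧ (rs.length : WithBot (WithTop ℕ)) = ringKrullDim A

open Limits in
/-- The mapping cone of a chain map `p : Σ^{-d} F → F` representing a class in `Ext^d_A(M,M)`
yields a short exact sequence `0 → M → K_p → Ω^{d-1}_A(M) → 0`.  Here the projective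
resolution `F` of `M` is encoded as `F n = G (n+1)` with `M = G 0` and augmented differentials
`δ n : G (n+1) ⟶ G n`, and `d = e + 1 ≥ 1`. -/
theorem statement3 (A : Type) [Ring A]
    (G : ℕ → ModuleCat.{0} A) (δ : ∀ n, G (n + 1) ⟶ G n)
    (hproj : ∀ n, Projective (G (n + 1)))
    (hepi : Function.Surjective (δ 0))
    (hexact : ∀ n, Function.Exact (δ (n + 1)) (δ n))
    (e : ℕ) (p : ∀ n, G (e + 2 + n) ⟶ G (n + 1))
    (hp : ∀ n, δ (e + 2 + n) ≫ p n = p (n + 1) ≫ δ (n + 1)) :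
    ∃ (α : G 0 ⟶ cokernel (biprod.desc (biprod.lift (-(δ (e + 1))) (p 0))
        (biprod.lift (0 : G 2 ⟶ G (e + 1)) (δ 1))))
      (β : cokernel (biprod.desc (biprod.lift (-(δ (e + 1))) (p 0))
        (biprod.lift (0 : G 2 ⟶ G (e + 1)) (δ 1))) ⟶ ModuleCat.of A (LinearMap.range (δ e).hom)),
      Function.Injective α ∧ Function.Surjective β ∧ Function.Exact ⇑α ⇑β := by
  
  classical
  have capp : ∀ {X Y Z : ModuleCat.{0} A} (f : X ⟶ Y) (g : Y ⟶ Z) (x : ↑X),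
      (f ≫ g) x = g (f x) := fun _ _ _ => rfl
  have hneg : ∀ {X Y : ModuleCat.{0} A} (h : X ⟶ Y) (x : ↑X), (-h) x = -(h x) :=
    fun _ _ => rfl
  have hzero : ∀ {X Y : ModuleCat.{0} A} (x : ↑X), (0 : X ⟶ Y) x = 0 := fun _ => rfl
  set f : G (e + 2) ⊞ G 2 ⟶ G (e + 1) ⊞ G 1 :=
    biprod.desc (biprod.lift (-(δ (e + 1))) (p 0)) (biprod.lift (0 : G 2 ⟶ G (e + 1)) (δ 1))
    with hfdef
  -- elementwise decomposition in a biproduct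
  have hdecomp : ∀ {X Y : ModuleCat.{0} A} (z : ↑(X ⊞ Y)),
      (biprod.inl : X ⟶ X ⊞ Y) ((biprod.fst : X ⊞ Y ⟶ X) z)
        + (biprod.inr : Y ⟶ X ⊞ Y) ((biprod.snd : X ⊞ Y ⟶ Y) z) = z := by
    intro X Y z
    exact congrArg (fun (h : X ⊞ Y ⟶ X ⊞ Y) => h z) (biprod.total (X := X) (Y := Y))
  have hlift : ∀ {X Y Z : ModuleCat.{0} A} (a : X ⟶ Y) (b : X ⟶ Z) (x : ↑X),
      (biprod.lift a b) x = (biprod.inl : Y ⟶ Y ⊞ Z) (a x) + (biprod.inr : Z ⟶ Y ⊞ Z) (b x) := by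
    intro X Y Z a b x
    have h1 : (biprod.fst : Y ⊞ Z ⟶ Y) ((biprod.lift a b) x) = a x := by
      rw [← capp, biprod.lift_fst]
    have h2 : (biprod.snd : Y ⊞ Z ⟶ Z) ((biprod.lift a b) x) = b x := by
      rw [← capp, biprod.lift_snd]
    conv_lhs => rw [← hdecomp ((biprod.lift a b) x)]
    rw [h1, h2]
  have l_inl_fst : ∀ {X Y : ModuleCat.{0} A} (x : ↑X),
      (biprod.fst : X ⊞ Y ⟶ X) ((biprod.inl : X ⟶ X ⊞ Y) x) = x := by
    intro X Y x; rw [← capp, biprod.inl_fst]; rfl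
  have l_inl_snd : ∀ {X Y : ModuleCat.{0} A} (x : ↑X),
      (biprod.snd : X ⊞ Y ⟶ Y) ((biprod.inl : X ⟶ X ⊞ Y) x) = 0 := by
    intro X Y x; rw [← capp, biprod.inl_snd]; rfl
  have l_inr_fst : ∀ {X Y : ModuleCat.{0} A} (y : ↑Y),
      (biprod.fst : X ⊞ Y ⟶ X) ((biprod.inr : Y ⟶ X ⊞ Y) y) = 0 := by
    intro X Y y; rw [← capp, biprod.inr_fst]; rfl
  have l_inr_snd : ∀ {X Y : ModuleCat.{0} A} (y : ↑Y),
      (biprod.snd : X ⊞ Y ⟶ Y) ((biprod.inr : Y ⟶ X ⊞ Y) y) = y := by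
    intro X Y y; rw [← capp, biprod.inr_snd]; rfl
  have hf_inl : ∀ x : ↑(G (e + 2)), f ((biprod.inl : G (e + 2) ⟶ _) x)
      = (biprod.inl : G (e + 1) ⟶ _) (-(δ (e + 1) x)) + (biprod.inr : G 1 ⟶ _) (p 0 x) := by
    intro x
    rw [hfdef, ← capp, biprod.inl_desc, hlift]
    rfl
  have hf_inr : ∀ y : ↑(G 2), f ((biprod.inr : G 2 ⟶ _) y)
      = (biprod.inr : G 1 ⟶ _) (δ 1 y) := by
    intro y
    rw [hfdef, ← capp, biprod.inr_desc, hlift, hzero, map_zero, zero_add]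
  set π : G (e + 1) ⊞ G 1 ⟶ cokernel f := cokernel.π f with hπdef
  have hπsurj : Function.Surjective π := (ModuleCat.epi_iff_surjective π).1 inferInstance
  have hker : ∀ z, π z = 0 ↔ z ∈ LinearMap.range f.hom := by
    intro z
    have hinj : Function.Injective ((ModuleCat.cokernelIsoRangeQuotient f).hom) :=
      (ModuleCat.mono_iff_injective _).1 inferInstance
    have h2 : (ModuleCat.cokernelIsoRangeQuotient f).hom (π z) = Submodule.Quotient.mk z := by
      rw [hπdef, ← capp, ModuleCat.cokernel_π_cokernelIsoRangeQuotient_hom]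
      rfl
    constructor
    · intro h
      rw [h, map_zero] at h2
      exact (Submodule.Quotient.mk_eq_zero _).1 h2.symm
    · intro h
      apply hinj
      rw [h2, map_zero]
      exact (Submodule.Quotient.mk_eq_zero _).2 h
  have hπf : ∀ w, π (f w) = 0 := fun w => (hker _).2 ⟨w, rfl⟩
  -- the map α
  have hq : ∀ v ∈ LinearMap.ker (δ 0).hom, π ((biprod.inr : G 1 ⟶ _) v) = 0 := by
    intro v hv
    obtain ⟨y, rfl⟩ := (hexact 0 v).1 hv
    rw [← hf_inr, hπf]
  let qmap : ↑(G 1) →ₗ[A] ↑(cokernel f) :=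
    { toFun := fun v => π ((biprod.inr : G 1 ⟶ _) v)
      map_add' := by intro a b; simp [map_add]
      map_smul' := by intro a b; simp [map_smul] }
  let eqv := (δ 0).hom.quotKerEquivOfSurjective hepi
  let α : G 0 ⟶ cokernel f :=
    ModuleCat.ofHom (((LinearMap.ker (δ 0).hom).liftQ qmap (fun v hv => hq v hv)).comp eqv.symm.toLinearMap)
  have heqv : ∀ v : ↑(G 1), eqv (Submodule.Quotient.mk v) = δ 0 v := by
    intro v
    simp [eqv, LinearMap.quotKerEquivOfSurjective]
  have hα : ∀ v : ↑(G 1), α (δ 0 v) = π ((biprod.inr : G 1 ⟶ _) v) := by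
    intro v
    have : eqv.symm (δ 0 v) = Submodule.Quotient.mk v := by
      apply eqv.injective; rw [LinearEquiv.apply_symm_apply, heqv]
    show ((LinearMap.ker (δ 0).hom).liftQ qmap (fun v hv => hq v hv)) (eqv.symm (δ 0 v)) = _
    rw [this]
    rfl
  -- the map β
  let r : G (e + 1) ⟶ ModuleCat.of A (LinearMap.range (δ e).hom) :=
    ModuleCat.ofHom (δ e).hom.rangeRestrict
  let g : G (e + 1) ⊞ G 1 ⟶ ModuleCat.of A (LinearMap.range (δ e).hom) := biprod.desc r 0
  have hg_inl : ∀ u : ↑(G (e + 1)), g ((biprod.inl : G (e + 1) ⟶ _) u) = (δ e).hom.rangeRestrict u := by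
    intro u; rw [← capp]; erw [biprod.inl_desc]; rfl
  have hg_inr : ∀ v : ↑(G 1), g ((biprod.inr : G 1 ⟶ _) v) = 0 := by
    intro v; rw [← capp]; erw [biprod.inr_desc]; rfl
  have hδδ : ∀ n (x : ↑(G (n + 2))), δ n (δ (n + 1) x) = 0 :=
    fun n x => (hexact n).apply_apply_eq_zero x
  have hg0 : f ≫ g = 0 := by
    apply ModuleCat.hom_ext
    apply LinearMap.ext
    intro w
    show g (f w) = 0
    rw [← hdecomp w, map_add, map_add, hf_inl, hf_inr, map_add, hg_inl, hg_inr, hg_inr]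
    have : (δ e).hom.rangeRestrict (-(δ (e + 1) ((biprod.fst : _ ⟶ G (e + 2)) w))) = 0 := by
      apply Subtype.ext
      simp [hδδ e]
    rw [this]
    simp
  let β : cokernel f ⟶ ModuleCat.of A (LinearMap.range (δ e).hom) := cokernel.desc f g hg0
  have hβ : ∀ z, β (π z) = g z :=
    fun z => congrArg (fun (h : G (e + 1) ⊞ G 1 ⟶ ModuleCat.of A (LinearMap.range (δ e).hom)) => h z)
      (cokernel.π_desc f g hg0)
  refine ⟨α, β, ?_, ?_, ?_⟩
  · -- injectivity of α
    rw [injective_iff_map_eq_zero]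
    intro m hm
    obtain ⟨v, rfl⟩ := hepi m
    rw [hα] at hm
    obtain ⟨w, hw⟩ := (hker _).1 hm
    have hw2 : f ((biprod.inl : G (e + 2) ⟶ _) ((biprod.fst : _ ⟶ G (e + 2)) w))
        + f ((biprod.inr : G 2 ⟶ _) ((biprod.snd : _ ⟶ G 2) w))
        = (biprod.inr : G 1 ⟶ _) v := by
      rw [← map_add, hdecomp w]; exact hw
    set a := (biprod.fst : _ ⟶ G (e + 2)) w
    set b := (biprod.snd : _ ⟶ G 2) w
    rw [hf_inl, hf_inr] at hw2
    have h1 : -(δ (e + 1) a) = 0 := by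
      have h' := congrArg (fun t => (biprod.fst : _ ⟶ G (e + 1)) t) hw2
      simp only [map_add, l_inl_fst, l_inr_fst, add_zero, zero_add, hneg] at h'
      exact h'
    have h2 : p 0 a + δ 1 b = v := by
      have h' := congrArg (fun t => (biprod.snd : _ ⟶ G 1) t) hw2
      simp only [map_add, l_inl_snd, l_inr_snd, add_zero, zero_add] at h'
      exact h'
    obtain ⟨c, hc⟩ := (hexact (e + 1) a).1 (neg_eq_zero.1 h1)
    have hpc : p 0 (δ (e + 2 + 0) c) = δ 1 (p 1 c) := by
      have := congrArg (fun (h : G (e + 2 + 0 + 1) ⟶ G 1) => h c) (hp 0)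
      simpa using this
    have hv : v = δ 1 (p 1 c + b) := by
      rw [map_add, ← hpc]
      rw [← h2]
      congr 1
      exact congrArg (p 0) hc.symm
    rw [hv]
    exact hδδ 0 _
  · -- surjectivity of β
    rintro ⟨w, u, hu⟩
    refine ⟨π ((biprod.inl : G (e + 1) ⟶ _) u), ?_⟩
    rw [hβ, hg_inl]
    exact Subtype.ext hu
  · -- exactness
    intro k
    obtain ⟨z, rfl⟩ := hπsurj k
    constructor
    · intro h
      rw [hβ] at h
      set u := (biprod.fst : _ ⟶ G (e + 1)) z with hu
      set v := (biprod.snd : _ ⟶ G 1) z with hv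
      have hgz : g z = (δ e).hom.rangeRestrict u := by
        rw [← hdecomp z, map_add, hg_inl, hg_inr, add_zero]
      rw [hgz] at h
      have hδu : δ e u = 0 := congrArg Subtype.val h
      obtain ⟨x, hx⟩ := (hexact e u).1 hδu
      refine ⟨δ 0 (p 0 x + v), ?_⟩
      rw [hα]
      have h0 : π ((biprod.inl : G (e + 1) ⟶ _) (-(δ (e + 1) x)))
          + π ((biprod.inr : G 1 ⟶ _) (p 0 x)) = 0 := by
        rw [← map_add, ← hf_inl]; exact hπf _
      have h1 : π ((biprod.inr : G 1 ⟶ _) (p 0 x))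
          = π ((biprod.inl : G (e + 1) ⟶ _) (δ (e + 1) x)) := by
        rw [map_neg, map_neg, neg_add_eq_zero] at h0
        exact h0.symm
      rw [map_add, map_add, h1, hx]
      rw [← map_add, hdecomp z]
    · rintro ⟨m, hm⟩
      obtain ⟨v, rfl⟩ := hepi m
      rw [← hm, hα, hβ, hg_inr]
end

section
/- Let Q be a regular local ring with maximal ideal n, I ⊆ n² an ideal generated by a Q-regular sequence, and J ⊆ I an ideal generated by a Q-regular sequence whose images in I/nI are linearly independent over the residue field k. Then J ∩ nI = nJ, and consequently the natural map J/nJ → I/nI is injective. -/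
set_option linter.unnecessarySimpa false
set_option maxHeartbeats 1000000

open CategoryTheory IsLocalRing

/-- If `J ⊆ I` is generated by a regular sequence whose images in `I/𝔫I` are linearly
independent, then `J ∩ 𝔫I = 𝔫J`; consequently the natural map `J/𝔫J → I/𝔫I` is injective. -/
theorem statement4 (Q : Type) [CommRing Q] [IsLocalRing Q] (hQ : IsRegularLocal Q)
    (c : ℕ) (f : Fin c → Q) (hfreg : RingTheory.Sequence.IsRegular Q (List.ofFn f))
    (I : Ideal Q) (hI : I = Ideal.span (Set.range f)) (hI2 : I ≤ maximalIdeal Q ^ 2)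
    (r : ℕ) (g : Fin r → Q) (hgI : ∀ i, g i ∈ I)
    (hgreg : RingTheory.Sequence.IsRegular Q (List.ofFn g))
    (J : Ideal Q) (hJ : J = Ideal.span (Set.range g))
    (hli : ∀ a : Fin r → Q, (∑ i, a i * g i) ∈ maximalIdeal Q • I →
      ∀ i, a i ∈ maximalIdeal Q) :
    J ⊓ (maximalIdeal Q • I) = maximalIdeal Q • J ∧
      ∀ x ∈ J, x ∈ maximalIdeal Q • I → x ∈ maximalIdeal Q • J := by
  have hJI : J ≤ I := by
    rw [hJ, Ideal.span_le]
    rintro x ⟨i, rfl⟩; exact hgI i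
  have h2 : ∀ x ∈ J, x ∈ maximalIdeal Q • I → x ∈ maximalIdeal Q • J := by
    intro x hxJ hxnI
    rw [hJ] at hxJ
    obtain ⟨a, ha⟩ := Ideal.mem_span_range_iff_exists_fun.mp hxJ
    have hmem : (∑ i, a i * g i) ∈ maximalIdeal Q • I := by
      rw [ha]; exact hxnI
    have haM := hli a hmem
    rw [← ha]
    exact Submodule.sum_mem _ fun i _ =>
      Submodule.smul_mem_smul (haM i) (hJ ▸ Ideal.subset_span ⟨i, rfl⟩)
  refine ⟨le_antisymm (fun x hx => h2 x hx.1 hx.2) (le_inf ?_ ?_), h2⟩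
  · exact le_trans Submodule.smul_le_right le_rfl
  · exact smul_mono_right _ hJI
end
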